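/- Uniform stability of x* = 1/2 for the impulsive jump dynamics: for each impulse, if γ solves γ'(s) = (1/2 − γ(s))·c·α(s) on J with c ≥ 0, α ≥ 0 continuous, then |γ(s) − 1/2| is nonincreasing in s; in particular |γ(1/2) − 1/2| ≤ |γ(−1/2) − 1/2|, so every ball {x : |x − 1/2| ≤ 1/l} is invariant under the jump map. -/

import Mathlib

/-- Uniform stability of `x* = 1/2` for the impulsive jump dynamics: along any
solution of `γ' = (1/2 - γ)·c·α(s)` on `J = [-1/2,1/2]` with `c ≥ 0` and `α ≥ 0`
continuous, `|γ(s) - 1/2|` is nonincreasing; in particular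
`|γ(1/2) - 1/2| ≤ |γ(-1/2) - 1/2|`, so each ball `{x : |x - 1/2| ≤ 1/l}` is
invariant under the jump map. -/
theorem stmt15 (c : ℝ) (hc : 0 ≤ c) (α : ℝ → ℝ) (hαc : Continuous α)
    (hα0 : ∀ s ∈ Set.Icc (-(1:ℝ)/2) (1/2), 0 ≤ α s)
    (γ : ℝ → ℝ)
    (hγ : ∀ s ∈ Set.Icc (-(1:ℝ)/2) (1/2),
      HasDerivAt γ ((1/2 - γ s) * (c * α s)) s) :
    (∀ s₁ ∈ Set.Icc (-(1:ℝ)/2) (1/2), ∀ s₂ ∈ Set.Icc (-(1:ℝ)/2) (1/2),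
      s₁ ≤ s₂ → |γ s₂ - 1/2| ≤ |γ s₁ - 1/2|) ∧
    |γ (1/2) - 1/2| ≤ |γ (-(1:ℝ)/2) - 1/2| ∧
    (∀ l : ℕ, 0 < l → |γ (-(1:ℝ)/2) - 1/2| ≤ 1/(l:ℝ) →
      |γ (1/2) - 1/2| ≤ 1/(l:ℝ)) := by
  set V : ℝ → ℝ := fun s => (γ s - 1/2)^2 with hV
  have hVd : ∀ s ∈ Set.Icc (-(1:ℝ)/2) (1/2),
      HasDerivAt V (2*(γ s - 1/2)*((1/2 - γ s) * (c * α s))) s := by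
    intro s hs
    have := ((hγ s hs).sub_const (1/2)).fun_pow 2
    simp only [hV]
    exact this.congr_deriv (by rw [show (2:ℕ) - 1 = 1 from rfl]; push_cast; ring)
  have hmono : AntitoneOn V (Set.Icc (-(1:ℝ)/2) (1/2)) := by
    apply antitoneOn_of_deriv_nonpos (convex_Icc _ _)
    · exact fun s hs => ((hVd s hs).continuousAt.continuousWithinAt)
    · intro s hs
      rw [interior_Icc] at hs
      exact ((hVd s (Set.mem_Icc_of_Ioo hs)).differentiableAt).differentiableWithinAt
    · intro s hs
      rw [interior_Icc] at hs
      have hs' := Set.mem_Icc_of_Ioo hs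
      rw [(hVd s hs').deriv]
      have hα := hα0 s hs'
      nlinarith [sq_nonneg (γ s - 1/2), mul_nonneg hc hα,
        mul_nonneg (mul_nonneg hc hα) (sq_nonneg (γ s - 1/2))]
  have key : ∀ s₁ ∈ Set.Icc (-(1:ℝ)/2) (1/2), ∀ s₂ ∈ Set.Icc (-(1:ℝ)/2) (1/2),
      s₁ ≤ s₂ → |γ s₂ - 1/2| ≤ |γ s₁ - 1/2| := by
    intro s₁ hs₁ s₂ hs₂ h
    have := hmono hs₁ hs₂ h
    simp only [hV] at this
    nlinarith [abs_nonneg (γ s₂ - 1/2), abs_nonneg (γ s₁ - 1/2),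
      sq_abs (γ s₂ - 1/2), sq_abs (γ s₁ - 1/2)]
  have hmem1 : (-(1:ℝ)/2) ∈ Set.Icc (-(1:ℝ)/2) (1/2) := by constructor <;> norm_num
  have hmem2 : (1:ℝ)/2 ∈ Set.Icc (-(1:ℝ)/2) (1/2) := by constructor <;> norm_num
  have hend := key _ hmem1 _ hmem2 (by norm_num)
  exact ⟨key, hend, fun l _ hl => hend.trans hl⟩
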